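/- For any complex z with Re z > 1/2 (so z ∉ [1/2 - i∞-cut region]) and a > 0 such that 1 + a²(z-1/2)² avoids the nonpositive reals, the modulus |(1 + sqrt(1 + a²(z-1/2)²))/(a(z-1/2))| > 1 when Re z > 1/2; i.e. the map f_{1a}(z) = (1 + sqrt(1+a²(z-1/2)²))/(a(z-1/2)) sends points off the critical line to points outside the closed unit disk. -/

import Mathlib

open Complex

lemma re_cpow_half_pos {x : ℂ} (hx : x ≠ 0) (harg : x.arg ≠ Real.pi) :
    0 < (x ^ ((1:ℂ)/2)).re := by
  rw [Complex.cpow_def_of_ne_zero hx, Complex.exp_re]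
  apply mul_pos (Real.exp_pos _)
  have him : (Complex.log x * ((1:ℂ)/2)).im = x.arg / 2 := by
    simp [Complex.mul_im, Complex.log_im]
    ring
  rw [him]
  apply Real.cos_pos_of_mem_Ioo
  constructor
  · have := Complex.neg_pi_lt_arg x
    linarith
  · have := lt_of_le_of_ne (Complex.arg_le_pi x) harg
    linarith

theorem stmt_16 (z : ℂ) (hz : 1/2 < z.re) (a : ℝ) (ha : 0 < a)
    (hcut : ∀ s : ℝ, s ≤ 0 → 1 + (a : ℂ)^2 * (z - 1/2)^2 ≠ (s : ℂ)) :
    1 < ‖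
        ((1 + (1 + (a : ℂ)^2 * (z - 1/2)^2) ^ ((1:ℂ)/2)) / ((a : ℂ) * (z - 1/2)))‖ := by
  set u : ℂ := 1 + (a : ℂ)^2 * (z - 1/2)^2 with hu
  set s : ℂ := u ^ ((1:ℂ)/2) with hsdef
  set w : ℂ := (a : ℂ) * (z - 1/2) with hw
  have hu0 : u ≠ 0 := by
    have := hcut 0 le_rfl
    simpa using this
  have harg : u.arg ≠ Real.pi := by
    intro h
    have hre : u.re < 0 ∧ u.im = 0 := Complex.arg_eq_pi_iff.mp h
    have := hcut u.re (le_of_lt hre.1)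
    apply this
    exact (Complex.ext (by simp) (by simp [hre.2])).symm
  have hres : 0 < s.re := re_cpow_half_pos hu0 harg
  have hs2 : s ^ 2 = u := by
    have : ((1:ℂ)/2) = ((2:ℕ) : ℂ)⁻¹ := by norm_num
    rw [hsdef, this, Complex.cpow_nat_inv_pow _ (by norm_num)]
  have hw2 : w ^ 2 = u - 1 := by rw [hw, hu]; ring
  have hwne : w ≠ 0 := by
    rw [hw]
    apply mul_ne_zero
    · exact_mod_cast ne_of_gt ha
    · intro h
      have h2 := congrArg Complex.re h
      simp [Complex.sub_re] at h2
      norm_num at h2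
      linarith
  have habsw : ‖w‖ ^ 2 = ‖s ^ 2 - 1‖ := by
    rw [← norm_pow, hw2, hs2]
  have hle : ‖s ^ 2 - 1‖ ≤ ‖s‖ ^ 2 + 1 := by
    calc ‖s ^ 2 - 1‖ ≤ ‖s ^ 2‖ + ‖(1:ℂ)‖ := by
          exact norm_sub_le _ _
      _ = ‖s‖ ^ 2 + 1 := by rw [norm_pow]; simp
  have key : ‖w‖ ^ 2 < ‖1 + s‖ ^ 2 := by
    have h1s : ‖1 + s‖ ^ 2 = 1 + 2 * s.re + ‖s‖ ^ 2 := by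
      rw [← Complex.normSq_eq_norm_sq, ← Complex.normSq_eq_norm_sq]
      simp [Complex.normSq_apply, Complex.add_re, Complex.add_im]
      ring
    rw [habsw, h1s]
    have : ‖s‖ ^ 2 + 1 < 1 + 2 * s.re + ‖s‖ ^ 2 := by linarith
    linarith [hle]
  have hlt : ‖w‖ < ‖1 + s‖ :=
    lt_of_pow_lt_pow_left₀ 2 (norm_nonneg _) key
  rw [norm_div]
  rw [lt_div_iff₀ (norm_pos_iff.mpr hwne)]
  simpa using hlt
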